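/- Let n and r be integers with 0 ≤ r and r + 1 < n, and set q = (n − r − 1)/(r + 1) > 0. Define L(a) = ∫_1^∞ (v^{2q} − 1)^{−1/2} · sinh(a) · (1 + v² sinh(a)²)^{−1/2} dv for a > 0. Then the total-height function a ↦ 2·L(a) is a continuous, strictly increasing bijection from (0, ∞) onto the open interval (0, π(r+1)/(n−r−1)). -/

import Mathlib

open Real MeasureTheory Set Filter Topology


/-- The half-height of the r-catenoid with neck radius `a` in `ℍⁿ × ℝ`. -/
noncomputable def catL (q a : ℝ) : ℝ :=
  ∫ v in Set.Ioi (1 : ℝ),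
    (v ^ (2 * q) - 1) ^ (-(1 : ℝ) / 2) * Real.sinh a *
      (1 + v ^ 2 * Real.sinh a ^ 2) ^ (-(1 : ℝ) / 2)

noncomputable def bnd (q v : ℝ) : ℝ := (v ^ (2*q) - 1) ^ (-(1:ℝ)/2) * v⁻¹
noncomputable def itg (q s v : ℝ) : ℝ :=
  (v ^ (2 * q) - 1) ^ (-(1 : ℝ) / 2) * s * (1 + v ^ 2 * s ^ 2) ^ (-(1 : ℝ) / 2)

lemma catL_eq (q a : ℝ) : catL q a = ∫ v in Set.Ioi (1:ℝ), itg q (Real.sinh a) v := rfl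

section aux

lemma rpow_neg_half' {x : ℝ} (hx : 0 ≤ x) : x ^ (-(1:ℝ)/2) = (Real.sqrt x)⁻¹ := by
  rw [neg_div, Real.rpow_neg hx, ← Real.sqrt_eq_rpow]

lemma mono_aux {v s₁ s₂ : ℝ} (hv : 0 < v) (hs₁ : 0 ≤ s₁) (h : s₁ < s₂) :
    s₁ * (Real.sqrt (1 + v^2*s₁^2))⁻¹ < s₂ * (Real.sqrt (1 + v^2*s₂^2))⁻¹ := by
  have h1 : (0:ℝ) < 1 + v^2*s₁^2 := by positivity
  have h2 : (0:ℝ) < 1 + v^2*s₂^2 := by positivity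
  have hA : 0 < Real.sqrt (1 + v^2*s₁^2) := Real.sqrt_pos.mpr h1
  have hB : 0 < Real.sqrt (1 + v^2*s₂^2) := Real.sqrt_pos.mpr h2
  rw [← div_eq_mul_inv, ← div_eq_mul_inv, div_lt_div_iff₀ hA hB]
  have key : (s₁ * Real.sqrt (1 + v^2*s₂^2))^2 < (s₂ * Real.sqrt (1 + v^2*s₁^2))^2 := by
    rw [mul_pow, mul_pow, Real.sq_sqrt h1.le, Real.sq_sqrt h2.le]
    nlinarith
  exact (pow_lt_pow_iff_left₀ (mul_nonneg hs₁ hB.le) (mul_nonneg (hs₁.trans h.le) hA.le)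
    two_ne_zero).mp key

lemma bound_aux {v s : ℝ} (hv : 0 < v) : |s| * (Real.sqrt (1 + v^2*s^2))⁻¹ ≤ v⁻¹ := by
  have h1 : (0:ℝ) < 1 + v^2*s^2 := by positivity
  have hB : 0 < Real.sqrt (1 + v^2*s^2) := Real.sqrt_pos.mpr h1
  rw [← div_eq_mul_inv, ← one_div, div_le_div_iff₀ hB hv]
  have : v * |s| = Real.sqrt ((v*s)^2) := by
    rw [Real.sqrt_sq_eq_abs, abs_mul, abs_of_pos hv]
  calc |s| * v = Real.sqrt ((v*s)^2) := by rw [← this]; ring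
    _ ≤ Real.sqrt (1 + v^2*s^2) := Real.sqrt_le_sqrt (by nlinarith [sq_abs s])
    _ = 1 * Real.sqrt (1 + v^2*s^2) := by ring

lemma bound_aux_strict {v s : ℝ} (hv : 0 < v) (hs : 0 < s) :
    s * (Real.sqrt (1 + v^2*s^2))⁻¹ < v⁻¹ := by
  have h1 : (0:ℝ) < 1 + v^2*s^2 := by positivity
  have hB : 0 < Real.sqrt (1 + v^2*s^2) := Real.sqrt_pos.mpr h1
  rw [← div_eq_mul_inv, ← one_div, div_lt_div_iff₀ hB hv]
  have : v * s = Real.sqrt ((v*s)^2) := by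
    rw [Real.sqrt_sq_eq_abs, abs_mul, abs_of_pos hv, abs_of_pos hs]
  calc s * v = Real.sqrt ((v*s)^2) := by rw [← this]; ring
    _ < Real.sqrt (1 + v^2*s^2) := by
        apply Real.sqrt_lt_sqrt (by positivity); nlinarith
    _ = 1 * Real.sqrt (1 + v^2*s^2) := by ring

lemma u_pos {q v : ℝ} (hq : 0 < q) (hv : 1 < v) : 0 < v ^ (2*q) - 1 :=
  sub_pos.mpr ((Real.one_lt_rpow_iff_of_pos (lt_trans one_pos hv)).mpr (Or.inl ⟨hv, by positivity⟩))

end aux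

section ftc

noncomputable def FF (q v : ℝ) : ℝ := q⁻¹ * Real.arctan (Real.sqrt (v ^ (2*q) - 1))

lemma hasDerivAt_FF {q : ℝ} (hq : 0 < q) {v : ℝ} (hv : 1 < v) :
    HasDerivAt (FF q) (bnd q v) v := by
  have hv0 : 0 < v := lt_trans one_pos hv
  have hu : 0 < v ^ (2*q) - 1 := u_pos hq hv
  have h1 : HasDerivAt (fun v : ℝ => v ^ (2*q) - 1) (2*q * v ^ (2*q - 1)) v :=
    (Real.hasDerivAt_rpow_const (Or.inl hv0.ne')).sub_const 1
  have h2 : HasDerivAt (fun v : ℝ => Real.sqrt (v ^ (2*q) - 1))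
      (1 / (2 * Real.sqrt (v ^ (2*q) - 1)) * (2*q * v ^ (2*q - 1))) v :=
    (Real.hasDerivAt_sqrt hu.ne').comp v h1
  have h3 := ((Real.hasDerivAt_arctan (Real.sqrt (v ^ (2*q) - 1))).comp v h2).const_mul q⁻¹
  refine h3.congr_deriv (Eq.symm ?_)
  have hsq : Real.sqrt (v ^ (2*q) - 1) ^ 2 = v ^ (2*q) - 1 := Real.sq_sqrt hu.le
  have hs0 : 0 < Real.sqrt (v ^ (2*q) - 1) := Real.sqrt_pos.mpr hu
  have hvp : (0:ℝ) < v ^ (2*q) := Real.rpow_pos_of_pos hv0 _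
  have hvm : v ^ (2*q - 1) = v ^ (2*q) * v⁻¹ := by
    rw [Real.rpow_sub hv0, Real.rpow_one, div_eq_mul_inv]
  rw [bnd, rpow_neg_half' hu.le, hsq, hvm]
  have : 1 + (v ^ (2*q) - 1) = v ^ (2*q) := by ring
  rw [this]
  field_simp

lemma FF_tendsto {q : ℝ} (hq : 0 < q) :
    Tendsto (FF q) atTop (𝓝 (q⁻¹ * (Real.pi / 2))) := by
  have h1 : Tendsto (fun v : ℝ => v ^ (2*q) - 1) atTop atTop :=
    tendsto_atTop_add_const_right _ _ (tendsto_rpow_atTop (by positivity))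
  have h3 : Tendsto Real.sqrt atTop atTop := by
    exact (tendsto_rpow_atTop (y := (1:ℝ)/2) (by norm_num)).congr
      (fun x => (Real.sqrt_eq_rpow x).symm)
  have h4 : Tendsto Real.arctan atTop (𝓝 (Real.pi / 2)) :=
    Real.tendsto_arctan_atTop.mono_right nhdsWithin_le_nhds
  exact ((h4.comp (h3.comp h1)).const_mul q⁻¹)

lemma FF_cont {q : ℝ} : ContinuousWithinAt (FF q) (Set.Ici 1) 1 := by
  apply ContinuousAt.continuousWithinAt
  exact continuousAt_const.mul (Real.continuous_arctan.continuousAt.comp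
    (Real.continuous_sqrt.continuousAt.comp
      (((Real.continuousAt_rpow_const 1 (2*q) (Or.inl one_ne_zero))).sub continuousAt_const)))

lemma bnd_nonneg {q v : ℝ} (hq : 0 < q) (hv : v ∈ Set.Ioi (1:ℝ)) : 0 ≤ bnd q v := by
  have hv0 : (0:ℝ) < v := lt_trans one_pos hv
  exact mul_nonneg (Real.rpow_nonneg (u_pos hq hv).le _) (by positivity)

lemma bnd_integrable {q : ℝ} (hq : 0 < q) : IntegrableOn (bnd q) (Set.Ioi 1) := by
  exact integrableOn_Ioi_deriv_of_nonneg FF_cont (fun x hx => hasDerivAt_FF hq hx)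
    (fun x hx => bnd_nonneg hq hx) (FF_tendsto hq)

lemma bnd_integral {q : ℝ} (hq : 0 < q) :
    ∫ v in Set.Ioi (1:ℝ), bnd q v = q⁻¹ * (Real.pi / 2) := by
  rw [integral_Ioi_of_hasDerivAt_of_tendsto FF_cont (fun x hx => hasDerivAt_FF hq hx)
    (bnd_integrable hq) (FF_tendsto hq)]
  simp [FF]

end ftc

section itglems

variable {q s v : ℝ}

lemma itg_eq (hq : 0 < q) (hv : 1 < v) (s : ℝ) :
    itg q s v = (v ^ (2*q) - 1) ^ (-(1:ℝ)/2) * (s * (Real.sqrt (1 + v^2*s^2))⁻¹) := by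
  rw [itg, rpow_neg_half' (u_pos hq hv).le,
    rpow_neg_half' (by positivity : (0:ℝ) ≤ 1 + v^2*s^2), mul_assoc]

lemma bnd_eq : bnd q v = (v ^ (2*q) - 1) ^ (-(1:ℝ)/2) * v⁻¹ := rfl

lemma C_pos (hq : 0 < q) (hv : 1 < v) : 0 < (v ^ (2*q) - 1) ^ (-(1:ℝ)/2) :=
  Real.rpow_pos_of_pos (u_pos hq hv) _

lemma norm_itg_le (hq : 0 < q) (hv : 1 < v) (s : ℝ) : ‖itg q s v‖ ≤ bnd q v := by
  have hv0 : (0:ℝ) < v := lt_trans one_pos hv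
  have hC := C_pos (v := v) hq hv
  have h2 : (0:ℝ) < 1 + v^2*s^2 := by positivity
  rw [itg_eq hq hv, bnd_eq, Real.norm_eq_abs, abs_mul, abs_of_pos hC, abs_mul,
    abs_of_pos (inv_pos.mpr (Real.sqrt_pos.mpr h2))]
  exact mul_le_mul_of_nonneg_left (bound_aux hv0) hC.le

lemma itg_lt_bnd (hq : 0 < q) (hv : 1 < v) (hs : 0 < s) : itg q s v < bnd q v := by
  have hv0 : (0:ℝ) < v := lt_trans one_pos hv
  rw [itg_eq hq hv, bnd_eq]
  exact mul_lt_mul_of_pos_left (bound_aux_strict hv0 hs) (C_pos hq hv)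

lemma itg_lt_itg {s₁ s₂ : ℝ} (hq : 0 < q) (hv : 1 < v) (hs₁ : 0 ≤ s₁) (h : s₁ < s₂) :
    itg q s₁ v < itg q s₂ v := by
  rw [itg_eq hq hv, itg_eq hq hv]
  exact mul_lt_mul_of_pos_left (mono_aux (lt_trans one_pos hv) hs₁ h) (C_pos hq hv)

lemma itg_pos (hq : 0 < q) (hv : 1 < v) (hs : 0 < s) : 0 < itg q s v := by
  have h2 : (0:ℝ) < 1 + v^2*s^2 := by positivity
  rw [itg_eq hq hv]
  exact mul_pos (C_pos hq hv) (mul_pos hs (inv_pos.mpr (Real.sqrt_pos.mpr h2)))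

lemma itg_contOn (hq : 0 < q) (s : ℝ) : ContinuousOn (fun v => itg q s v) (Set.Ioi 1) := by
  intro v hv
  have hv1 : (1:ℝ) < v := hv
  have hv0 : (0:ℝ) < v := lt_trans one_pos hv1
  apply ContinuousAt.continuousWithinAt
  have c1 : ContinuousAt (fun v : ℝ => (v ^ (2*q) - 1) ^ (-(1:ℝ)/2)) v := by
    apply ContinuousAt.rpow_const
    · exact (Real.continuousAt_rpow_const v (2*q) (Or.inl hv0.ne')).sub continuousAt_const
    · exact Or.inl (u_pos hq hv1).ne'
  have c2 : ContinuousAt (fun v : ℝ => (1 + v^2*s^2) ^ (-(1:ℝ)/2)) v := by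
    apply ContinuousAt.rpow_const
    · fun_prop
    · exact Or.inl (by positivity)
  exact (c1.mul continuousAt_const).mul c2

lemma itg_meas (hq : 0 < q) (s : ℝ) :
    AEStronglyMeasurable (fun v => itg q s v) (volume.restrict (Set.Ioi 1)) :=
  (itg_contOn hq s).aestronglyMeasurable measurableSet_Ioi

lemma itg_integrable (hq : 0 < q) (s : ℝ) : IntegrableOn (fun v => itg q s v) (Set.Ioi 1) := by
  apply Integrable.mono' (bnd_integrable hq) (itg_meas hq s)
  filter_upwards [ae_restrict_mem measurableSet_Ioi] with v hv
  exact norm_itg_le hq hv s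

end itglems

section catl

variable {q : ℝ}

lemma support_pos_aux {f : ℝ → ℝ} (h : ∀ v ∈ Set.Ioi (1:ℝ), f v ≠ 0) :
    0 < volume ((Function.support f) ∩ Set.Ioi 1) := by
  have hsub : Set.Ioi (1:ℝ) ⊆ (Function.support f) ∩ Set.Ioi 1 := fun v hv => ⟨h v hv, hv⟩
  calc (0:ENNReal) < volume (Set.Ioi (1:ℝ)) := by simp [Real.volume_Ioi]
    _ ≤ _ := measure_mono hsub

lemma catL_continuous (hq : 0 < q) : Continuous (catL q) := by
  apply continuous_of_dominated (bound := bnd q) (fun a => itg_meas hq (Real.sinh a))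
  · intro a
    filter_upwards [ae_restrict_mem measurableSet_Ioi] with v hv
    exact norm_itg_le hq hv _
  · exact bnd_integrable hq
  · filter_upwards [ae_restrict_mem measurableSet_Ioi] with v hv
    have hv0 : (0:ℝ) < v := lt_trans one_pos hv
    apply Continuous.mul
    · exact continuous_const.mul Real.continuous_sinh
    · apply Continuous.rpow_const
      · fun_prop
      · intro a; exact Or.inl (by positivity)

lemma catL_zero : catL q 0 = 0 := by
  simp [catL]

lemma catL_strictMono (hq : 0 < q) {a b : ℝ} (ha : 0 < a) (hab : a < b) :
    catL q a < catL q b := by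
  have hsa : 0 < Real.sinh a := Real.sinh_pos_iff.mpr ha
  have hss : Real.sinh a < Real.sinh b := Real.sinh_lt_sinh.mpr hab
  have hia := itg_integrable hq (Real.sinh a)
  have hib := itg_integrable hq (Real.sinh b)
  have hdiff : IntegrableOn (fun v => itg q (Real.sinh b) v - itg q (Real.sinh a) v)
      (Set.Ioi 1) := hib.sub hia
  have key : 0 < ∫ v in Set.Ioi (1:ℝ), (itg q (Real.sinh b) v - itg q (Real.sinh a) v) := by
    rw [setIntegral_pos_iff_support_of_nonneg_ae ?_ hdiff]
    · exact support_pos_aux (fun v hv => (sub_pos.mpr (itg_lt_itg hq hv hsa.le hss)).ne')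
    · filter_upwards [ae_restrict_mem measurableSet_Ioi] with v hv
      exact sub_nonneg.mpr (itg_lt_itg hq hv hsa.le hss).le
  have hsplit : (∫ v in Set.Ioi (1:ℝ), (itg q (Real.sinh b) v - itg q (Real.sinh a) v)) =
      (∫ v in Set.Ioi (1:ℝ), itg q (Real.sinh b) v) -
        ∫ v in Set.Ioi (1:ℝ), itg q (Real.sinh a) v := integral_sub hib hia
  rw [hsplit] at key
  rw [catL_eq, catL_eq]
  linarith

lemma catL_pos (hq : 0 < q) {a : ℝ} (ha : 0 < a) : 0 < catL q a := by
  have hsa : 0 < Real.sinh a := Real.sinh_pos_iff.mpr ha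
  rw [catL_eq]
  rw [setIntegral_pos_iff_support_of_nonneg_ae ?_ (itg_integrable hq _)]
  · exact support_pos_aux (fun v hv => (itg_pos hq hv hsa).ne')
  · filter_upwards [ae_restrict_mem measurableSet_Ioi] with v hv
    exact (itg_pos hq hv hsa).le

lemma catL_lt_half (hq : 0 < q) {a : ℝ} (ha : 0 < a) : catL q a < q⁻¹ * (Real.pi / 2) := by
  have hsa : 0 < Real.sinh a := Real.sinh_pos_iff.mpr ha
  have hia := itg_integrable hq (Real.sinh a)
  have hdiff : IntegrableOn (fun v => bnd q v - itg q (Real.sinh a) v)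
      (Set.Ioi 1) := (bnd_integrable hq).sub hia
  have key : 0 < ∫ v in Set.Ioi (1:ℝ), (bnd q v - itg q (Real.sinh a) v) := by
    rw [setIntegral_pos_iff_support_of_nonneg_ae ?_ hdiff]
    · exact support_pos_aux (fun v hv => (sub_pos.mpr (itg_lt_bnd hq hv hsa)).ne')
    · filter_upwards [ae_restrict_mem measurableSet_Ioi] with v hv
      exact sub_nonneg.mpr (itg_lt_bnd hq hv hsa).le
  have hsplit : (∫ v in Set.Ioi (1:ℝ), (bnd q v - itg q (Real.sinh a) v)) =
      (∫ v in Set.Ioi (1:ℝ), bnd q v) -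
        ∫ v in Set.Ioi (1:ℝ), itg q (Real.sinh a) v := integral_sub (bnd_integrable hq) hia
  rw [hsplit, bnd_integral hq] at key
  rw [catL_eq]
  linarith

lemma sinh_tendsto_atTop : Tendsto Real.sinh atTop atTop := by
  apply tendsto_atTop_mono' atTop ?_ tendsto_id
  filter_upwards [eventually_gt_atTop 0] with x hx
  exact (Real.self_lt_sinh_iff.mpr hx).le

lemma kernel_tendsto {v : ℝ} (hv0 : 0 < v) :
    Tendsto (fun s : ℝ => s * (Real.sqrt (1 + v^2*s^2))⁻¹) atTop (𝓝 v⁻¹) := by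
  have h1 : Tendsto (fun s : ℝ => (s^2)⁻¹ + v^2) atTop (𝓝 (0 + v^2)) := by
    exact ((tendsto_pow_atTop two_ne_zero).inv_tendsto_atTop).add tendsto_const_nhds
  rw [zero_add] at h1
  have h2 : Tendsto (fun s : ℝ => (Real.sqrt ((s^2)⁻¹ + v^2))⁻¹) atTop (𝓝 ((Real.sqrt (v^2))⁻¹)) := by
    exact ((Real.continuous_sqrt.continuousAt.tendsto.comp h1).inv₀
      (by positivity))
  rw [Real.sqrt_sq hv0.le] at h2
  apply h2.congr'
  filter_upwards [eventually_gt_atTop 0] with s hs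
  have hrw : 1 + v^2*s^2 = s^2 * ((s^2)⁻¹ + v^2) := by
    field_simp
  rw [hrw, Real.sqrt_mul (by positivity), Real.sqrt_sq hs.le, mul_inv, ← mul_assoc,
    mul_inv_cancel₀ hs.ne', one_mul]

lemma itg_tendsto (hq : 0 < q) {v : ℝ} (hv : 1 < v) :
    Tendsto (fun a => itg q (Real.sinh a) v) atTop (𝓝 (bnd q v)) := by
  have hv0 : (0:ℝ) < v := lt_trans one_pos hv
  have h := ((kernel_tendsto hv0).comp sinh_tendsto_atTop).const_mul
    ((v ^ (2*q) - 1) ^ (-(1:ℝ)/2))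
  rw [bnd_eq]
  apply h.congr
  intro a
  simp only [Function.comp_apply]
  exact (itg_eq hq hv (Real.sinh a)).symm

lemma catL_tendsto_atTop (hq : 0 < q) :
    Tendsto (catL q) atTop (𝓝 (q⁻¹ * (Real.pi / 2))) := by
  rw [← bnd_integral hq]
  apply tendsto_integral_filter_of_dominated_convergence (bnd q)
    (Eventually.of_forall (fun a => itg_meas hq (Real.sinh a)))
  · apply Eventually.of_forall
    intro a
    filter_upwards [ae_restrict_mem measurableSet_Ioi] with v hv
    exact norm_itg_le hq hv _
  · exact bnd_integrable hq
  · filter_upwards [ae_restrict_mem measurableSet_Ioi] with v hv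
    exact itg_tendsto hq hv

end catl

/-- For integers `0 ≤ r`, `r + 1 < n` and `q = (n-r-1)/(r+1)`,
the total-height function `a ↦ 2 L(a)` is a continuous strictly increasing bijection
from `(0, ∞)` onto `(0, π(r+1)/(n-r-1))`. -/
theorem stmt_13 (n r : ℤ) (hr : 0 ≤ r) (hrn : r + 1 < n)
    (q : ℝ) (hq : q = ((n : ℝ) - r - 1) / ((r : ℝ) + 1)) :
    StrictMonoOn (fun a => 2 * catL q a) (Set.Ioi 0) ∧
    ContinuousOn (fun a => 2 * catL q a) (Set.Ioi 0) ∧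
    Set.BijOn (fun a => 2 * catL q a) (Set.Ioi 0)
      (Set.Ioo 0 (Real.pi * ((r : ℝ) + 1) / ((n : ℝ) - r - 1))) := by
  have hr1 : (0:ℝ) < (r:ℝ) + 1 := by positivity
  have hn1 : (0:ℝ) < (n:ℝ) - r - 1 := by
    have : ((r:ℤ) + 1 : ℤ) < n := hrn
    have h2 : ((r:ℝ) + 1 : ℝ) < n := by exact_mod_cast this
    linarith
  have hq0 : 0 < q := hq ▸ div_pos hn1 hr1
  have hT : Real.pi * ((r:ℝ) + 1) / ((n:ℝ) - r - 1) = 2 * (q⁻¹ * (Real.pi / 2)) := by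
    rw [hq]
    field_simp
  have hsm : StrictMonoOn (fun a => 2 * catL q a) (Set.Ioi 0) := by
    intro a ha b hb hab
    have := catL_strictMono hq0 ha hab
    show 2 * catL q a < 2 * catL q b
    linarith
  have hcont : Continuous (fun a => 2 * catL q a) := continuous_const.mul (catL_continuous hq0)
  refine ⟨hsm, hcont.continuousOn, ?_, hsm.injOn, ?_⟩
  · -- MapsTo
    intro a ha
    have ha' : (0:ℝ) < a := ha
    constructor
    · have := catL_pos hq0 ha'
      show (0:ℝ) < 2 * catL q a
      linarith
    · rw [hT]
      have := catL_lt_half hq0 ha'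
      show 2 * catL q a < 2 * (q⁻¹ * (Real.pi / 2))
      linarith
  · -- SurjOn
    intro y hy
    rw [hT] at hy
    obtain ⟨hy1, hy2⟩ := hy
    have h2 : Tendsto (fun a => 2 * catL q a) atTop (𝓝 (2 * (q⁻¹ * (Real.pi / 2)))) :=
      (catL_tendsto_atTop hq0).const_mul 2
    obtain ⟨b, hby, hb0⟩ := ((h2.eventually (eventually_gt_nhds hy2)).and
      (eventually_gt_atTop 0)).exists
    have h0 : Tendsto (fun a => 2 * catL q a) (𝓝[>] 0) (𝓝 0) := by
      have := (hcont.tendsto 0).mono_left (nhdsWithin_le_nhds (s := Set.Ioi (0:ℝ)))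
      simpa [catL_zero] using this
    obtain ⟨a, hay, ha0⟩ := ((h0.eventually (eventually_lt_nhds hy1)).and
      self_mem_nhdsWithin).exists
    have ha0' : (0:ℝ) < a := ha0
    have hab : a < b := by
      rcases lt_trichotomy a b with h | h | h
      · exact h
      · exfalso; rw [h] at hay; linarith
      · exfalso
        have h2' : 2 * catL q b < 2 * catL q a :=
          hsm (Set.mem_Ioi.mpr hb0) (Set.mem_Ioi.mpr ha0') h
        linarith
    obtain ⟨c, hc, hcy⟩ := intermediate_value_Ioo hab.le hcont.continuousOn
      (Set.mem_Ioo.mpr ⟨hay, hby⟩)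
    exact ⟨c, Set.mem_Ioi.mpr (ha0'.trans hc.1), hcy⟩
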